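/- Let K ≥ 1 and t ∈ {0,…,K−1} be integers, and let α_1,…,α_K be reals with 0 < α_1 ≤ ⋯ ≤ α_K. For k ∈ {1,…,K} define f_k := (C(K,t+1) − C(K−k,t+1)) / C(K,t), let τ_0 := max_{k ∈ {1,…,K}} f_k/α_k, and let k* ∈ {1,…,K} be an index attaining this maximum. Suppose r_1,…,r_K are nonnegative reals with r_k = 0 for all k ∈ {1,…,k*} and ∑_{i=k*+1}^{k} r_i ≤ α_{k*+1} − α_{k*}·(f_k/f_{k*}) for all k ∈ {k*+1,…,K}. Then α_k − ∑_{i=1}^{k} r_i > 0 for every k ∈ {1,…,K} and max_{k ∈ {1,…,K}} f_k/(α_k − ∑_{i=1}^{k} r_i) = τ_0. -/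

import Mathlib

/-- Corollary 1 (topological holes): non-content GDoF tuples supported in the
stated region leave the minimum delivery time τ₀ unchanged. -/
theorem stmt6 (K t : ℕ) (hK : 1 ≤ K) (ht : t < K)
    (α r : ℕ → ℝ) (hα0 : 0 < α 1)
    (hαmono : ∀ k ∈ Finset.Icc 1 (K - 1), α k ≤ α (k + 1))
    (f : ℕ → ℝ)
    (hf : ∀ k, f k = ((K.choose (t + 1) : ℝ) - ((K - k).choose (t + 1) : ℝ)) /
      (K.choose t : ℝ))
    (τ0 : ℝ)
    (hτ0 : τ0 = (Finset.Icc 1 K).sup' (Finset.nonempty_Icc.mpr hK)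
      (fun k => f k / α k))
    (kstar : ℕ) (hks : kstar ∈ Finset.Icc 1 K)
    (hksmax : f kstar / α kstar = τ0)
    (hr0 : ∀ k ∈ Finset.Icc 1 K, 0 ≤ r k)
    (hrz : ∀ k ∈ Finset.Icc 1 kstar, r k = 0)
    (hrb : ∀ k ∈ Finset.Icc (kstar + 1) K,
      ∑ i ∈ Finset.Icc (kstar + 1) k, r i ≤ α (kstar + 1) - α kstar * (f k / f kstar)) :
    (∀ k ∈ Finset.Icc 1 K, 0 < α k - ∑ i ∈ Finset.Icc 1 k, r i) ∧
    (Finset.Icc 1 K).sup' (Finset.nonempty_Icc.mpr hK)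
      (fun k => f k / (α k - ∑ i ∈ Finset.Icc 1 k, r i)) = τ0 := by
  have hKt : (0:ℝ) < K.choose t := by exact_mod_cast Nat.choose_pos ht.le
  -- monotonicity of α on [1, K]
  have hmono : ∀ a b : ℕ, 1 ≤ a → a ≤ b → b ≤ K → α a ≤ α b := by
    intro a b ha hab hbK
    obtain ⟨n, rfl⟩ := Nat.exists_eq_add_of_le hab
    clear hab
    induction n with
    | zero => simp
    | succ n ih =>
      have h1 : a + n ≤ K := by omega
      have h2 := hαmono (a + n) (by simp only [Finset.mem_Icc]; omega)
      have h3 : a + (n + 1) = a + n + 1 := by omega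
      rw [h3]
      exact le_trans (ih h1) h2
  have αpos : ∀ k, 1 ≤ k → k ≤ K → 0 < α k := by
    intro k h1 h2
    exact lt_of_lt_of_le hα0 (hmono 1 k le_rfl h1 h2)
  have fpos : ∀ k, 1 ≤ k → 0 < f k := by
    intro k hk
    rw [hf]
    apply div_pos _ hKt
    have h2 : (K - k).choose (t+1) ≤ (K-1).choose (t+1) :=
      Nat.choose_le_choose _ (by omega)
    have h3 : (K-1).choose (t+1) < K.choose (t+1) := by
      have hK1 : K = (K-1) + 1 := by omega
      have hp : 0 < (K-1).choose t := Nat.choose_pos (by omega)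
      have hps : K.choose (t+1) = (K-1).choose t + (K-1).choose (t+1) := by
        conv_lhs => rw [hK1]
        exact Nat.choose_succ_succ _ _
      omega
    have h4 : (K - k).choose (t+1) < K.choose (t+1) := lt_of_le_of_lt h2 h3
    have := (Nat.cast_lt (α := ℝ)).mpr h4
    linarith
  have hkstar1 : 1 ≤ kstar := (Finset.mem_Icc.mp hks).1
  have hkstarK : kstar ≤ K := (Finset.mem_Icc.mp hks).2
  have hSz : ∀ k, k ≤ kstar → ∑ i ∈ Finset.Icc 1 k, r i = 0 := by
    intro k hk
    apply Finset.sum_eq_zero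
    intro i hi
    have := Finset.mem_Icc.mp hi
    exact hrz i (Finset.mem_Icc.mpr ⟨this.1, le_trans this.2 hk⟩)
  have hSsplit : ∀ k, kstar ≤ k →
      ∑ i ∈ Finset.Icc 1 k, r i = ∑ i ∈ Finset.Icc (kstar+1) k, r i := by
    intro k hk
    have hdisj : Disjoint (Finset.Icc 1 kstar) (Finset.Icc (kstar+1) k) := by
      rw [Finset.disjoint_left]
      intro i h1 h2
      simp only [Finset.mem_Icc] at h1 h2
      omega
    have h1 : Finset.Icc 1 k = Finset.Icc 1 kstar ∪ Finset.Icc (kstar+1) k := by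
      ext i; simp only [Finset.mem_Icc, Finset.mem_union]; omega
    rw [h1, Finset.sum_union hdisj, hSz kstar le_rfl, zero_add]
  have hαks : 0 < α kstar := αpos kstar hkstar1 hkstarK
  have hfks : 0 < f kstar := fpos kstar hkstar1
  have hτ0' : τ0 = f kstar / α kstar := hksmax.symm
  -- the two key facts for each k
  have key : ∀ k ∈ Finset.Icc 1 K,
      0 < α k - ∑ i ∈ Finset.Icc 1 k, r i ∧
      f k / (α k - ∑ i ∈ Finset.Icc 1 k, r i) ≤ τ0 := by
    intro k hk
    obtain ⟨hk1, hkK⟩ := Finset.mem_Icc.mp hk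
    by_cases hcase : k ≤ kstar
    · rw [hSz k hcase, sub_zero]
      refine ⟨αpos k hk1 hkK, ?_⟩
      rw [hτ0]
      exact Finset.le_sup' (fun k => f k / α k) hk
    · push_neg at hcase
      have hk' : k ∈ Finset.Icc (kstar+1) K := Finset.mem_Icc.mpr ⟨hcase, hkK⟩
      have hfk : 0 < f k := fpos k hk1
      have hD : 0 < α kstar * (f k / f kstar) :=
        mul_pos hαks (div_pos hfk hfks)
      have hS := hSsplit k hcase.le
      have hb := hrb k hk'
      have hα1 : α (kstar+1) ≤ α k := hmono (kstar+1) k (by omega) hcase hkK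
      have hge : α kstar * (f k / f kstar) ≤ α k - ∑ i ∈ Finset.Icc 1 k, r i := by
        rw [hS]; linarith
      refine ⟨lt_of_lt_of_le hD hge, ?_⟩
      have h1 : f k / (α k - ∑ i ∈ Finset.Icc 1 k, r i) ≤
          f k / (α kstar * (f k / f kstar)) := by
        gcongr
      have h2 : f k / (α kstar * (f k / f kstar)) = f kstar / α kstar := by
        field_simp
      rw [h2] at h1
      rw [hτ0']
      exact h1
  refine ⟨fun k hk => (key k hk).1, ?_⟩
  apply le_antisymm
  · exact Finset.sup'_le _ _ (fun k hk => (key k hk).2)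
  · have h1 : f kstar / (α kstar - ∑ i ∈ Finset.Icc 1 kstar, r i) = τ0 := by
      rw [hSz kstar le_rfl, sub_zero, hksmax]
    calc τ0 = f kstar / (α kstar - ∑ i ∈ Finset.Icc 1 kstar, r i) := h1.symm
      _ ≤ _ := Finset.le_sup' (fun k => f k / (α k - ∑ i ∈ Finset.Icc 1 k, r i)) hks
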